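/- For every nonnegative integer n, Σ_{m=0}^{n} S1_C(n, m) · BC_m equals (−1)^j D_j / L_j^2 if n = r^j − 1 for some nonnegative integer j, and equals 0 otherwise; here S1_C denotes the Stirling-Carlitz numbers of the first kind and BC_m the Bernoulli-Carlitz numbers. -/

import Mathlib

open scoped Classical
open PowerSeries Finset

noncomputable section

variable (F : Type) [Field F] [Fintype F]

/-- The rational function field `K = 𝔽_r(T)`. -/
abbrev K : Type := RatFunc F

/-- `r`, the cardinality of the finite field of constants. -/
def rr : ℕ := Fintype.card F

/-- The variable `T` of the rational function field. -/
def Tv : K F := RatFunc.X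

/-- `[i] = T^{r^i} - T`. -/
def br (i : ℕ) : K F := Tv F ^ (rr F) ^ i - Tv F

/-- `D_0 = 1`, `D_i = [i] · D_{i-1}^r`. -/
def D : ℕ → K F
  | 0 => 1
  | i + 1 => br F (i + 1) * D i ^ rr F

/-- `L_0 = 1`, `L_i = [i] · L_{i-1}`. -/
def L : ℕ → K F
  | 0 => 1
  | i + 1 => br F (i + 1) * L i

/-- The Carlitz factorial `Π(n) = ∏_j D_j^{c_j}`, where `c_j = n / r^j % r` are the
base-`r` digits of `n` (all digits with index `> n` vanish since `r ≥ 2`). -/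
def Cf (n : ℕ) : K F := ∏ j ∈ Finset.range (n + 1), D F j ^ (n / (rr F) ^ j % rr F)

/-- The Carlitz logarithm `log_C(z) = Σ_{i ≥ 0} (-1)^i z^{r^i} / L_i`: the coefficient of
`z^m` is `(-1)^i / L_i` if `m = r^i` and `0` otherwise (note `i ≤ r^i = m` since `r ≥ 2`). -/
def logC : PowerSeries (K F) :=
  PowerSeries.mk fun m =>
    ∑ i ∈ Finset.range (m + 1), if m = (rr F) ^ i then (-1 : K F) ^ i / L F i else 0

/-- The Carlitz exponential `e_C(z) = Σ_{i ≥ 0} z^{r^i} / D_i`. -/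
def eC : PowerSeries (K F) :=
  PowerSeries.mk fun m =>
    ∑ i ∈ Finset.range (m + 1), if m = (rr F) ^ i then 1 / D F i else 0

/-- The power series `log_C(z)/z`. -/
def logCdivZ : PowerSeries (K F) :=
  PowerSeries.mk fun n => PowerSeries.coeff (n + 1) (logC F)

/-- The power series `e_C(z)/z`. -/
def eCdivZ : PowerSeries (K F) :=
  PowerSeries.mk fun n => PowerSeries.coeff (n + 1) (eC F)

/-! ### Auxiliary lemmas -/

lemma hr2 : 2 ≤ rr F := Fintype.one_lt_card

lemma rpos : 0 < rr F := by have := hr2 F; omega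

lemma rpow_pos (i : ℕ) : 0 < rr F ^ i := Nat.pow_pos (n := i) (rpos F)

lemma lt_rpow (i : ℕ) : i < rr F ^ i := Nat.lt_pow_self (n := i) (hr2 F)

lemma rpow_injective : Function.Injective (fun i => rr F ^ i) :=
  fun _ _ h => Nat.pow_right_injective (hr2 F) h

lemma br_ne_zero {i : ℕ} (hi : 1 ≤ i) : br F i ≠ 0 := by
  have h2 : 2 ≤ rr F ^ i := le_trans (hr2 F) (Nat.le_self_pow (by omega) _)
  unfold br Tv
  rw [sub_ne_zero]
  intro h
  have hX : (RatFunc.X : RatFunc F) = algebraMap (Polynomial F) _ Polynomial.X :=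
    (RatFunc.algebraMap_X).symm
  rw [hX, ← map_pow] at h
  have := RatFunc.algebraMap_injective F h
  have := congrArg Polynomial.natDegree this
  rw [Polynomial.natDegree_X_pow, Polynomial.natDegree_X] at this
  omega

lemma D_ne_zero (i : ℕ) : D F i ≠ 0 := by
  induction i with
  | zero => simp [D]
  | succ k ih =>
    simp only [D]
    exact mul_ne_zero (br_ne_zero F (by omega)) (pow_ne_zero _ ih)

lemma L_ne_zero (i : ℕ) : L F i ≠ 0 := by
  induction i with
  | zero => simp [L]
  | succ k ih =>
    simp only [L]
    exact mul_ne_zero (br_ne_zero F (by omega)) ih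

lemma Cf_ne_zero (n : ℕ) : Cf F n ≠ 0 := by
  unfold Cf
  exact Finset.prod_ne_zero_iff.mpr fun j _ => pow_ne_zero _ (D_ne_zero F j)

lemma exists_char : ∃ p e : ℕ, Nat.Prime p ∧ CharP (K F) p ∧ rr F = p ^ e := by
  haveI := ringChar.charP F
  obtain ⟨n, hp, hcard⟩ := FiniteField.card F (ringChar F)
  refine ⟨ringChar F, n, hp, ?_, hcard⟩
  exact charP_of_injective_ringHom (algebraMap F (K F)).injective (ringChar F)

/-- `l_i = (-1)^i / L_i`. -/
def ll (i : ℕ) : K F := (-1 : K F) ^ i / L F i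

/-- `a_k = 1 / D_k`. -/
def aa (k : ℕ) : K F := 1 / D F k

lemma coeff_logC (i : ℕ) : PowerSeries.coeff (rr F ^ i) (logC F) = ll F i := by
  rw [logC, PowerSeries.coeff_mk]
  rw [Finset.sum_eq_single i]
  · simp [ll]
  · intro k _ hk
    rw [if_neg]
    exact fun h => hk (rpow_injective F h.symm)
  · intro h
    exact absurd (Finset.mem_range.mpr (Nat.lt_succ_of_lt (lt_rpow F i))) h

lemma coeff_logC_eq_zero {m : ℕ} (h : ∀ i, m ≠ rr F ^ i) :
    PowerSeries.coeff m (logC F) = 0 := by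
  rw [logC, PowerSeries.coeff_mk]
  exact Finset.sum_eq_zero fun i _ => if_neg (h i)

lemma constantCoeff_logC : PowerSeries.constantCoeff (logC F) = 0 := by
  rw [← PowerSeries.coeff_zero_eq_constantCoeff_apply]
  exact coeff_logC_eq_zero F fun i => (rpow_pos F i).ne

lemma coeff_eC (i : ℕ) : PowerSeries.coeff (rr F ^ i) (eC F) = aa F i := by
  rw [eC, PowerSeries.coeff_mk]
  rw [Finset.sum_eq_single i]
  · simp [aa]
  · intro k _ hk
    rw [if_neg]
    exact fun h => hk (rpow_injective F h.symm)
  · intro h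
    exact absurd (Finset.mem_range.mpr (Nat.lt_succ_of_lt (lt_rpow F i))) h

lemma coeff_eC_eq_zero {m : ℕ} (h : ∀ i, m ≠ rr F ^ i) :
    PowerSeries.coeff m (eC F) = 0 := by
  rw [eC, PowerSeries.coeff_mk]
  exact Finset.sum_eq_zero fun i _ => if_neg (h i)

lemma constantCoeff_eC : PowerSeries.constantCoeff (eC F) = 0 := by
  rw [← PowerSeries.coeff_zero_eq_constantCoeff_apply]
  exact coeff_eC_eq_zero F fun i => (rpow_pos F i).ne

/-- Vanishing of low coefficients of powers of a series with zero constant term. -/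
lemma coeff_pow_eq_zero {g : PowerSeries (K F)} (hg : PowerSeries.constantCoeff g = 0)
    {n m : ℕ} (h : n < m) : PowerSeries.coeff n (g ^ m) = 0 := by
  have hdvd : (PowerSeries.X : PowerSeries (K F)) ^ m ∣ g ^ m :=
    pow_dvd_pow_of_dvd (PowerSeries.X_dvd_iff.mpr hg) m
  exact PowerSeries.X_pow_dvd_iff.mp hdvd n h

/-- Formal composition, defined coefficientwise. -/
def pcomp (f g : PowerSeries (K F)) : PowerSeries (K F) :=
  PowerSeries.mk fun n => ∑ m ∈ Finset.range (n + 1),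
    PowerSeries.coeff m f * PowerSeries.coeff n (g ^ m)

lemma coeff_pcomp (f g : PowerSeries (K F)) (n : ℕ) :
    PowerSeries.coeff n (pcomp F f g) = ∑ m ∈ Finset.range (n + 1),
      PowerSeries.coeff m f * PowerSeries.coeff n (g ^ m) := by
  rw [pcomp, PowerSeries.coeff_mk]

lemma coeff_pcomp_ext {g : PowerSeries (K F)} (hg : PowerSeries.constantCoeff g = 0)
    (f : PowerSeries (K F)) {n N : ℕ} (hN : n < N) :
    PowerSeries.coeff n (pcomp F f g) = ∑ m ∈ Finset.range N,
      PowerSeries.coeff m f * PowerSeries.coeff n (g ^ m) := by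
  rw [coeff_pcomp]
  refine Finset.sum_subset (Finset.range_subset_range.mpr hN) ?_
  intro m _ hm
  rw [Finset.mem_range, not_lt] at hm
  rw [coeff_pow_eq_zero F hg hm, mul_zero]

lemma pcomp_one (g : PowerSeries (K F)) : pcomp F 1 g = 1 := by
  ext n
  rw [coeff_pcomp]
  rw [Finset.sum_eq_single 0]
  · simp
  · intro m _ hm
    simp [PowerSeries.coeff_one, hm]
  · intro h
    exact absurd (Finset.mem_range.mpr (Nat.succ_pos n)) h

set_option linter.unusedSectionVars false

/-- Triangle swap for double sums. -/
lemma triangle_swap {M : Type*} [AddCommMonoid M] (n : ℕ) (G : ℕ → ℕ → M) :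
    ∑ m ∈ Finset.range (n + 1), ∑ k ∈ Finset.range (m + 1), G k (m - k) =
      ∑ a ∈ Finset.range (n + 1), ∑ b ∈ Finset.range (n + 1 - a), G a b := by
  rw [Finset.sum_sigma', Finset.sum_sigma']
  refine Finset.sum_nbij' (fun p => ⟨p.2, p.1 - p.2⟩) (fun p => ⟨p.1 + p.2, p.1⟩) ?_ ?_ ?_ ?_ ?_
  · rintro ⟨m, k⟩ hp
    simp only [Finset.mem_sigma, Finset.mem_range] at hp
    refine Finset.mem_sigma.mpr ⟨?_, ?_⟩ <;> simp <;> omega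
  · rintro ⟨a, b⟩ hp
    simp only [Finset.mem_sigma, Finset.mem_range] at hp
    refine Finset.mem_sigma.mpr ⟨?_, ?_⟩ <;> simp <;> omega
  · rintro ⟨m, k⟩ hp
    simp only [Finset.mem_sigma, Finset.mem_range] at hp
    show (⟨k + (m - k), k⟩ : Σ _ : ℕ, ℕ) = ⟨m, k⟩
    exact Sigma.mk.inj_iff.mpr ⟨by omega, HEq.rfl⟩
  · rintro ⟨a, b⟩ hp
    simp only [Finset.mem_sigma, Finset.mem_range] at hp
    show (⟨a, a + b - a⟩ : Σ _ : ℕ, ℕ) = ⟨a, b⟩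
    exact Sigma.mk.inj_iff.mpr ⟨rfl, heq_of_eq (by omega)⟩
  · rintro ⟨m, k⟩ _
    rfl

lemma pcomp_mul {g : PowerSeries (K F)} (hg : PowerSeries.constantCoeff g = 0)
    (f₁ f₂ : PowerSeries (K F)) :
    pcomp F (f₁ * f₂) g = pcomp F f₁ g * pcomp F f₂ g := by
  ext n
  rw [PowerSeries.coeff_mul, coeff_pcomp]
  -- expand the right side
  have hR : ∀ p ∈ Finset.HasAntidiagonal.antidiagonal n,
      PowerSeries.coeff p.1 (pcomp F f₁ g) * PowerSeries.coeff p.2 (pcomp F f₂ g)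
        = ∑ a ∈ Finset.range (n + 1), ∑ b ∈ Finset.range (n + 1),
            PowerSeries.coeff a f₁ * PowerSeries.coeff b f₂ *
              (PowerSeries.coeff p.1 (g ^ a) * PowerSeries.coeff p.2 (g ^ b)) := by
    intro p hp
    rw [Finset.HasAntidiagonal.mem_antidiagonal] at hp
    rw [coeff_pcomp_ext F hg f₁ (show p.1 < n + 1 by omega),
      coeff_pcomp_ext F hg f₂ (show p.2 < n + 1 by omega), Finset.sum_mul_sum]
    refine Finset.sum_congr rfl fun a _ => Finset.sum_congr rfl fun b _ => by ring
  rw [Finset.sum_congr rfl hR, Finset.sum_comm]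
  have step : ∀ a ∈ Finset.range (n + 1),
      (∑ p ∈ Finset.HasAntidiagonal.antidiagonal n, ∑ b ∈ Finset.range (n + 1),
        PowerSeries.coeff a f₁ * PowerSeries.coeff b f₂ *
          (PowerSeries.coeff p.1 (g ^ a) * PowerSeries.coeff p.2 (g ^ b)))
      = ∑ b ∈ Finset.range (n + 1), PowerSeries.coeff a f₁ *
          PowerSeries.coeff b f₂ * PowerSeries.coeff n (g ^ (a + b)) := by
    intro a _
    rw [Finset.sum_comm]
    refine Finset.sum_congr rfl fun b _ => ?_
    rw [← Finset.mul_sum, pow_add, PowerSeries.coeff_mul]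
  rw [Finset.sum_congr rfl step]
  -- now both sides are sums over pairs; restrict ranges and compare
  have hL : ∀ m ∈ Finset.range (n + 1),
      PowerSeries.coeff m (f₁ * f₂) * PowerSeries.coeff n (g ^ m)
      = ∑ k ∈ Finset.range (m + 1), PowerSeries.coeff k f₁ *
          PowerSeries.coeff (m - k) f₂ *
          PowerSeries.coeff n (g ^ (k + (m - k))) := by
    intro m hm
    rw [PowerSeries.coeff_mul, Finset.Nat.sum_antidiagonal_eq_sum_range_succ_mk, Finset.sum_mul]
    refine Finset.sum_congr rfl fun k hk => ?_
    rw [Finset.mem_range] at hk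
    rw [show k + (m - k) = m by omega]
  rw [Finset.sum_congr rfl hL, triangle_swap n (fun a b => PowerSeries.coeff a f₁ *
    PowerSeries.coeff b f₂ * PowerSeries.coeff n (g ^ (a + b)))]
  refine Finset.sum_congr rfl fun a ha => ?_
  rw [Finset.mem_range] at ha
  refine Finset.sum_subset (Finset.range_subset_range.mpr (by omega)) ?_
  intro b hb hb'
  rw [Finset.mem_range] at hb hb'
  rw [coeff_pow_eq_zero F hg (show n < a + b by omega), mul_zero]

lemma pcomp_X_mul {g : PowerSeries (K F)} (hg : PowerSeries.constantCoeff g = 0)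
    (f : PowerSeries (K F)) :
    pcomp F (PowerSeries.X * f) g = g * pcomp F f g := by
  ext n
  rw [coeff_pcomp, PowerSeries.coeff_mul]
  -- peel off the m = 0 term on the left
  rw [Finset.sum_range_succ']
  have h0 : PowerSeries.coeff 0 (PowerSeries.X * f) = 0 := by
    simp [PowerSeries.coeff_zero_eq_constantCoeff]
  rw [h0, zero_mul, add_zero]
  have hterm : ∀ k ∈ Finset.range n,
      PowerSeries.coeff (k + 1) (PowerSeries.X * f) *
        PowerSeries.coeff n (g ^ (k + 1))
      = ∑ p ∈ Finset.HasAntidiagonal.antidiagonal n, PowerSeries.coeff p.1 g *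
          (PowerSeries.coeff k f * PowerSeries.coeff p.2 (g ^ k)) := by
    intro k _
    rw [PowerSeries.coeff_succ_X_mul, pow_succ', PowerSeries.coeff_mul, Finset.mul_sum]
    refine Finset.sum_congr rfl fun p _ => by ring
  rw [Finset.sum_congr rfl hterm, Finset.sum_comm]
  refine Finset.sum_congr rfl fun p hp => ?_
  rw [Finset.HasAntidiagonal.mem_antidiagonal] at hp
  rw [← Finset.mul_sum, coeff_pcomp]
  by_cases hp1 : p.1 = 0
  · rw [hp1] at hp ⊢
    rw [PowerSeries.coeff_zero_eq_constantCoeff, hg, zero_mul, zero_mul]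
  · congr 1
    refine (Finset.sum_subset (Finset.range_subset_range.mpr (by omega)) ?_).symm
    intro k hk hk'
    rw [Finset.mem_range, not_lt] at hk'
    rw [coeff_pow_eq_zero F hg (by omega), mul_zero]

lemma step_key {Kf : Type*} [Field Kf] (bi bj c A P s : Kf)
    (hA : A ≠ 0) (hc : c ≠ 0) (hP : P ≠ 0) (hX : bj - bi ≠ 0) :
    bj * (s / A * (1 / ((bj - bi) * P))) =
      bi * (s / A * (1 / ((bj - bi) * P))) - c * (s * -1 / (c * A) * (1 / P)) := by
  field_simp
  ring

lemma br_pow_char {p e : ℕ} (hp : p.Prime) (hc : CharP (K F) p) (hre : rr F = p ^ e)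
    (m i : ℕ) : br F m ^ rr F ^ i = br F (m + i) - br F i := by
  haveI := Fact.mk hp
  haveI := hc
  have hri : rr F ^ i = p ^ (e * i) := by rw [hre, ← pow_mul]
  unfold br
  calc (Tv F ^ rr F ^ m - Tv F) ^ rr F ^ i
      = (Tv F ^ rr F ^ m) ^ rr F ^ i - Tv F ^ rr F ^ i := by
        rw [hri]; exact sub_pow_char_pow _ _ _
    _ = Tv F ^ rr F ^ (m + i) - Tv F ^ rr F ^ i := by
        rw [← pow_mul, ← pow_add]
    _ = (Tv F ^ rr F ^ (m + i) - Tv F) - (Tv F ^ rr F ^ i - Tv F) := by ring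

lemma identity_one {p e : ℕ} (hp : p.Prime) (hc : CharP (K F) p) (hre : rr F = p ^ e)
    (j : ℕ) :
    ∑ i ∈ Finset.range (j + 1), ll F i * aa F (j - i) ^ rr F ^ i
      = if j = 0 then 1 else 0 := by
  rcases Nat.eq_zero_or_pos j with h0 | hj
  · subst h0
    simp [ll, aa, L, D]
  · rw [if_neg hj.ne']
    set f : ℕ → K F := fun i => ll F i * aa F (j - i) ^ rr F ^ i with hf
    have step : ∀ i ∈ Finset.range j,
        br F j * f i = br F i * f i - br F (i + 1) * f (i + 1) := by
      intro i hi
      rw [Finset.mem_range] at hi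
      obtain ⟨t, ht⟩ : ∃ t, j - i = t + 1 := ⟨j - i - 1, by omega⟩
      have hji : j - (i + 1) = t := by omega
      have hD : D F (j - i) ^ rr F ^ i
          = (br F j - br F i) * D F t ^ rr F ^ (i + 1) := by
        rw [ht]
        show (br F (t + 1) * D F t ^ rr F) ^ rr F ^ i = _
        rw [mul_pow, br_pow_char F hp hc hre (t + 1) i, show t + 1 + i = j by omega,
          ← pow_mul, ← pow_succ']
      have hL1 : L F (i + 1) = br F (i + 1) * L F i := rfl
      have hbd : br F j - br F i ≠ 0 := by
        have heq : br F j - br F i = br F (t + 1) ^ rr F ^ i := by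
          rw [br_pow_char F hp hc hre (t + 1) i, show t + 1 + i = j by omega]
        rw [heq]
        exact pow_ne_zero _ (br_ne_zero F (by omega))
      have hLi : L F i ≠ 0 := L_ne_zero F i
      have hDt : D F t ≠ 0 := D_ne_zero F t
      have hDtp : D F t ^ rr F ^ (i + 1) ≠ 0 := pow_ne_zero _ hDt
      have hbi1 : br F (i + 1) ≠ 0 := br_ne_zero F (by omega)
      have e1 : aa F (j - i) ^ rr F ^ i
          = 1 / ((br F j - br F i) * D F t ^ rr F ^ (i + 1)) := by
        simp only [aa, div_pow, one_pow]
        rw [hD]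
      have e2 : aa F (j - (i + 1)) ^ rr F ^ (i + 1) = 1 / D F t ^ rr F ^ (i + 1) := by
        simp only [hji, aa, div_pow, one_pow]
      have e3 : ll F (i + 1) = (-1 : K F) ^ i * -1 / (br F (i + 1) * L F i) := by
        simp only [ll, hL1, pow_succ]
      have e4 : ll F i = (-1 : K F) ^ i / L F i := rfl
      simp only [hf]
      rw [e1, e2, e3, e4]
      exact step_key _ _ _ _ _ _ hLi hbi1 hDtp hbd
    have tele : br F j * ∑ i ∈ Finset.range j, f i = - (br F j * f j) := by
      rw [Finset.mul_sum, Finset.sum_congr rfl step]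
      have hsub := Finset.sum_range_sub (fun i => br F i * f i) j
      have : ∑ i ∈ Finset.range j, (br F i * f i - br F (i + 1) * f (i + 1))
          = -(br F j * f j - br F 0 * f 0) := by
        rw [← hsub, ← Finset.sum_neg_distrib]
        exact Finset.sum_congr rfl fun i _ => by ring
      rw [this]
      have hbr0 : br F 0 = 0 := by simp [br]
      rw [hbr0, zero_mul]
      ring
    have hbrj : br F j ≠ 0 := br_ne_zero F hj
    have hsum : ∑ i ∈ Finset.range j, f i = - f j :=
      mul_left_cancel₀ hbrj (by rw [tele]; ring)
    rw [Finset.sum_range_succ, hsum]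
    ring

/-- The candidate inverse sequence. -/
def hh : ℕ → K F
  | 0 => 1
  | j + 1 => -∑ k ∈ Finset.range (j + 1), aa F (k + 1) * hh (j - k) ^ rr F ^ (k + 1)
decreasing_by omega

lemma identity_two (j : ℕ) :
    ∑ k ∈ Finset.range (j + 1), aa F k * hh F (j - k) ^ rr F ^ k
      = if j = 0 then 1 else 0 := by
  cases j with
  | zero => simp [hh, aa, D]
  | succ j =>
    rw [if_neg (Nat.succ_ne_zero j)]
    rw [Finset.sum_range_succ']
    have h0 : aa F 0 * hh F (j + 1 - 0) ^ rr F ^ 0 = hh F (j + 1) := by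
      simp [aa, D]
    rw [h0]
    have h1 : ∀ k ∈ Finset.range (j + 1),
        aa F (k + 1) * hh F (j + 1 - (k + 1)) ^ rr F ^ (k + 1)
          = aa F (k + 1) * hh F (j - k) ^ rr F ^ (k + 1) := by
      intro k _
      rw [Nat.succ_sub_succ]
    rw [Finset.sum_congr rfl h1]
    have h2 : hh F (j + 1)
        = -∑ k ∈ Finset.range (j + 1), aa F (k + 1) * hh F (j - k) ^ rr F ^ (k + 1) := by
      rw [hh]
    rw [h2]
    ring

lemma identity_three {p e : ℕ} (hp : p.Prime) (hc : CharP (K F) p) (hre : rr F = p ^ e)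
    (j : ℕ) : hh F j = ll F j := by
  haveI := Fact.mk hp
  haveI := hc
  have eval1 : ∑ i ∈ Finset.range (j + 1),
      ll F i * (∑ k ∈ Finset.range (j + 1 - i), aa F k * hh F (j - i - k) ^ rr F ^ k)
        ^ rr F ^ i = ll F j := by
    have hterm : ∀ i ∈ Finset.range (j + 1),
        ll F i * (∑ k ∈ Finset.range (j + 1 - i), aa F k * hh F (j - i - k) ^ rr F ^ k)
          ^ rr F ^ i = if i = j then ll F i else 0 := by
      intro i hi
      rw [Finset.mem_range] at hi
      have hr : j + 1 - i = (j - i) + 1 := by omega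
      rw [hr, identity_two F (j - i)]
      by_cases hij : i = j
      · rw [if_pos hij, if_pos (by omega), one_pow, mul_one]
      · rw [if_neg (by omega), if_neg hij, zero_pow (pow_ne_zero _ (rpos F).ne'), mul_zero]
    rw [Finset.sum_congr rfl hterm, Finset.sum_ite_eq' (Finset.range (j + 1)) j (ll F)]
    rw [if_pos (Finset.self_mem_range_succ j)]
  have eval2 : ∑ i ∈ Finset.range (j + 1),
      ll F i * (∑ k ∈ Finset.range (j + 1 - i), aa F k * hh F (j - i - k) ^ rr F ^ k)
        ^ rr F ^ i = hh F j := by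
    have hterm : ∀ i ∈ Finset.range (j + 1),
        ll F i * (∑ k ∈ Finset.range (j + 1 - i), aa F k * hh F (j - i - k) ^ rr F ^ k)
          ^ rr F ^ i
        = ∑ k ∈ Finset.range (j + 1 - i),
            ll F i * aa F k ^ rr F ^ i * hh F (j - i - k) ^ rr F ^ (k + i) := by
      intro i hi
      have hri : rr F ^ i = p ^ (e * i) := by rw [hre, ← pow_mul]
      rw [hri, sum_pow_char_pow, Finset.mul_sum]
      refine Finset.sum_congr rfl fun k _ => ?_
      rw [mul_pow, ← pow_mul, ← hri, ← pow_add]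
      ring
    rw [Finset.sum_congr rfl hterm]
    rw [← triangle_swap j (fun a b => ll F a * aa F b ^ rr F ^ a
      * hh F (j - a - b) ^ rr F ^ (b + a))]
    have hterm2 : ∀ m ∈ Finset.range (j + 1),
        (∑ k ∈ Finset.range (m + 1),
          ll F k * aa F (m - k) ^ rr F ^ k * hh F (j - k - (m - k)) ^ rr F ^ (m - k + k))
        = if m = 0 then hh F (j - m) ^ rr F ^ m else 0 := by
      intro m hm
      rw [Finset.mem_range] at hm
      have hx : ∀ k ∈ Finset.range (m + 1),
          ll F k * aa F (m - k) ^ rr F ^ k * hh F (j - k - (m - k)) ^ rr F ^ (m - k + k)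
          = ll F k * aa F (m - k) ^ rr F ^ k * hh F (j - m) ^ rr F ^ m := by
        intro k hk
        rw [Finset.mem_range] at hk
        rw [show j - k - (m - k) = j - m by omega, show m - k + k = m by omega]
      rw [Finset.sum_congr rfl hx, ← Finset.sum_mul, identity_one F hp hc hre m]
      by_cases hm0 : m = 0
      · rw [if_pos hm0, if_pos hm0, one_mul]
      · rw [if_neg hm0, if_neg hm0, zero_mul]
    rw [Finset.sum_congr rfl hterm2,
      Finset.sum_ite_eq' (Finset.range (j + 1)) 0 (fun m => hh F (j - m) ^ rr F ^ m)]
    rw [if_pos (Finset.mem_range.mpr (Nat.succ_pos j))]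
    simp
  rw [← eval1, eval2]

lemma identity_E1 {p e : ℕ} (hp : p.Prime) (hc : CharP (K F) p) (hre : rr F = p ^ e)
    (j : ℕ) :
    ∑ k ∈ Finset.range (j + 1), aa F k * ll F (j - k) ^ rr F ^ k
      = if j = 0 then 1 else 0 := by
  rw [← identity_two F j]
  exact Finset.sum_congr rfl fun k _ => by rw [identity_three F hp hc hre]

lemma charP_powerSeries {p : ℕ} (hc : CharP (K F) p) :
    CharP (PowerSeries (K F)) p := by
  haveI := hc
  refine charP_of_injective_ringHom (f := (PowerSeries.C : K F →+* PowerSeries (K F)))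
    (fun a b hab => ?_) p
  simpa using congrArg (PowerSeries.constantCoeff) hab

lemma coeff_logC_pow {p e : ℕ} (hp : p.Prime) (hc : CharP (K F) p) (hre : rr F = p ^ e)
    (k m : ℕ) :
    PowerSeries.coeff m (logC F ^ rr F ^ k)
      = ∑ i ∈ Finset.range (m + 1),
          if m = rr F ^ (i + k) then ll F i ^ rr F ^ k else 0 := by
  haveI := Fact.mk hp
  haveI := charP_powerSeries F hc
  set P : PowerSeries (K F) := ∑ i ∈ Finset.range (m + 1),
    PowerSeries.C (ll F i) * PowerSeries.X ^ rr F ^ i with hP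
  have hQ : ∀ s < m + 1, PowerSeries.coeff s (logC F - P) = 0 := by
    intro s hs
    rw [map_sub]
    have hcP : PowerSeries.coeff s P
        = ∑ i ∈ Finset.range (m + 1), if s = rr F ^ i then ll F i else 0 := by
      rw [hP]
      rw [map_sum]
      refine Finset.sum_congr rfl fun i _ => ?_
      rw [PowerSeries.coeff_C_mul, PowerSeries.coeff_X_pow, mul_ite, mul_one, mul_zero]
    have hcL : PowerSeries.coeff s (logC F)
        = ∑ i ∈ Finset.range (m + 1), if s = rr F ^ i then ll F i else 0 := by
      rw [logC, PowerSeries.coeff_mk]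
      refine Finset.sum_subset (Finset.range_subset_range.mpr (by omega)) ?_
      intro i _ hi
      rw [Finset.mem_range, not_lt] at hi
      rw [if_neg]
      intro h
      have := lt_rpow F i
      omega
    rw [hcP, hcL, sub_self]
  have hdvd : (PowerSeries.X : PowerSeries (K F)) ^ (m + 1) ∣ (logC F - P) :=
    PowerSeries.X_pow_dvd_iff.mpr hQ
  have hsplit : logC F ^ rr F ^ k = P ^ rr F ^ k + (logC F - P) ^ rr F ^ k := by
    have : logC F = P + (logC F - P) := by ring
    rw [hre, ← pow_mul]
    conv_lhs => rw [this]
    exact add_pow_char_pow P (logC F - P) p (e * k)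
  rw [hsplit, map_add]
  have hzero : PowerSeries.coeff m ((logC F - P) ^ rr F ^ k) = 0 := by
    have h1 : (logC F - P) ∣ (logC F - P) ^ rr F ^ k :=
      dvd_pow_self _ (rpow_pos F k).ne'
    exact PowerSeries.X_pow_dvd_iff.mp (dvd_trans hdvd h1) m (Nat.lt_succ_self m)
  rw [hzero, add_zero, hP]
  have hPpow : (∑ i ∈ Finset.range (m + 1),
      PowerSeries.C (ll F i) * PowerSeries.X ^ rr F ^ i) ^ rr F ^ k
      = ∑ i ∈ Finset.range (m + 1),
          PowerSeries.C (ll F i ^ rr F ^ k) * PowerSeries.X ^ rr F ^ (i + k) := by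
    have hek : ∀ t : ℕ, rr F ^ t = p ^ (e * t) := fun t => by rw [hre, ← pow_mul]
    rw [hek k, sum_pow_char_pow]
    refine Finset.sum_congr rfl fun i _ => ?_
    rw [mul_pow, ← map_pow, ← pow_mul, ← hek k, ← pow_add]
  rw [hPpow, map_sum]
  refine Finset.sum_congr rfl fun i _ => ?_
  rw [PowerSeries.coeff_C_mul, PowerSeries.coeff_X_pow, mul_ite, mul_one, mul_zero]

lemma pcomp_eC_logC {p e : ℕ} (hp : p.Prime) (hc : CharP (K F) p) (hre : rr F = p ^ e) :
    pcomp F (eC F) (logC F) = PowerSeries.X := by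
  ext n
  rw [coeff_pcomp, PowerSeries.coeff_X]
  -- rewrite the coefficient of eC as a sum of ifs, extended to range (n+1)
  have hA : ∀ m ∈ Finset.range (n + 1),
      PowerSeries.coeff m (eC F) * PowerSeries.coeff n (logC F ^ m)
      = ∑ t ∈ Finset.range (n + 1),
          (if m = rr F ^ t then aa F t else 0) * PowerSeries.coeff n (logC F ^ m) := by
    intro m hm
    rw [Finset.mem_range] at hm
    rw [eC, PowerSeries.coeff_mk, ← Finset.sum_mul]
    congr 1
    refine Finset.sum_subset (Finset.range_subset_range.mpr (by omega)) ?_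
    intro t _ ht
    rw [Finset.mem_range, not_lt] at ht
    rw [if_neg]
    intro h
    have := lt_rpow F t
    omega
  rw [Finset.sum_congr rfl hA, Finset.sum_comm]
  have hB : ∀ t ∈ Finset.range (n + 1),
      (∑ m ∈ Finset.range (n + 1),
        (if m = rr F ^ t then aa F t else 0) * PowerSeries.coeff n (logC F ^ m))
      = if rr F ^ t ≤ n then aa F t * PowerSeries.coeff n (logC F ^ rr F ^ t)
        else 0 := by
    intro t _
    have : ∀ m ∈ Finset.range (n + 1),
        (if m = rr F ^ t then aa F t else 0) * PowerSeries.coeff n (logC F ^ m)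
        = if m = rr F ^ t
            then aa F t * PowerSeries.coeff n (logC F ^ rr F ^ t) else 0 := by
      intro m _
      by_cases h : m = rr F ^ t
      · rw [if_pos h, if_pos h, h]
      · rw [if_neg h, if_neg h, zero_mul]
    rw [Finset.sum_congr rfl this,
      Finset.sum_ite_eq' (Finset.range (n + 1)) (rr F ^ t)
        (fun _ => aa F t * PowerSeries.coeff n (logC F ^ rr F ^ t))]
    congr 1
    simp [Nat.lt_succ_iff]
  rw [Finset.sum_congr rfl hB]
  by_cases hn : ∃ j, n = rr F ^ j
  · obtain ⟨j, hj⟩ := hn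
    have hjn : j < n + 1 := by have := lt_rpow F j; omega
    have hstep : ∀ t ∈ Finset.range (j + 1),
        (if rr F ^ t ≤ n then aa F t * PowerSeries.coeff n (logC F ^ rr F ^ t) else 0)
        = aa F t * ll F (j - t) ^ rr F ^ t := by
      intro t ht
      rw [Finset.mem_range] at ht
      have hle : rr F ^ t ≤ n := by
        rw [hj]
        exact Nat.pow_le_pow_right (by have := hr2 F; omega) (by omega)
      rw [if_pos hle, coeff_logC_pow F hp hc hre]
      congr 1
      rw [Finset.sum_eq_single (j - t)]
      · rw [if_pos (by rw [hj]; congr 1; omega)]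
      · intro i _ hi
        rw [if_neg]
        rw [hj]
        intro h
        have := rpow_injective F h
        omega
      · intro h
        have hjt : j - t < n + 1 := by omega
        exact absurd (Finset.mem_range.mpr hjt) h
    have hred : ∑ t ∈ Finset.range (n + 1),
        (if rr F ^ t ≤ n then aa F t * PowerSeries.coeff n (logC F ^ rr F ^ t) else 0)
        = ∑ t ∈ Finset.range (j + 1),
        (if rr F ^ t ≤ n then aa F t * PowerSeries.coeff n (logC F ^ rr F ^ t) else 0) := by
      refine (Finset.sum_subset (Finset.range_subset_range.mpr (by omega)) ?_).symm
      intro t _ ht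
      rw [Finset.mem_range, not_lt] at ht
      rw [if_neg]
      rw [hj]
      intro h
      have h2 : rr F ^ j < rr F ^ t :=
        Nat.pow_lt_pow_right (by have := hr2 F; omega) (by omega)
      omega
    rw [hred, Finset.sum_congr rfl hstep, identity_E1 F hp hc hre j]
    have : n = 1 ↔ j = 0 := by
      constructor
      · intro h1
        by_contra hj0
        have h2 : rr F ^ 1 ≤ rr F ^ j := Nat.pow_le_pow_right (by have := hr2 F; omega) (by omega)
        rw [pow_one] at h2
        have := hr2 F
        omega
      · intro h0
        rw [hj, h0, pow_zero]
    by_cases hj0 : j = 0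
    · rw [if_pos hj0, if_pos (this.mpr hj0)]
    · rw [if_neg hj0, if_neg (fun h => hj0 (this.mp h))]
  · push_neg at hn
    have : ∀ t ∈ Finset.range (n + 1),
        (if rr F ^ t ≤ n then aa F t * PowerSeries.coeff n (logC F ^ rr F ^ t) else 0)
        = 0 := by
      intro t _
      by_cases h : rr F ^ t ≤ n
      · rw [if_pos h, coeff_logC_pow F hp hc hre]
        rw [Finset.sum_eq_zero fun i _ => if_neg (hn (i + t)), mul_zero]
      · rw [if_neg h]
    rw [Finset.sum_congr rfl this, Finset.sum_const, smul_zero, if_neg]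
    exact fun h1 => (hn 0) (by rw [h1, pow_zero])

lemma digit_eq {j t : ℕ} (ht : t < j) : (rr F ^ j - 1) / rr F ^ t % rr F = rr F - 1 := by
  have hr := hr2 F
  have h1 : rr F ^ t * rr F ^ (j - t) = rr F ^ j := by
    rw [← pow_add]
    congr 1
    omega
  have hbt := rpow_pos F t
  have hbjt := rpow_pos F (j - t)
  have h3 : rr F ^ t * (rr F ^ (j - t) - 1) + rr F ^ t = rr F ^ j := by
    rw [← Nat.mul_succ, Nat.succ_eq_add_one, Nat.sub_add_cancel hbjt, h1]
  have hdiv : (rr F ^ j - 1) / rr F ^ t = rr F ^ (j - t) - 1 := by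
    have heq : rr F ^ j - 1 = rr F ^ t * (rr F ^ (j - t) - 1) + (rr F ^ t - 1) := by omega
    rw [heq, Nat.mul_add_div hbt, Nat.div_eq_of_lt (by omega), add_zero]
  rw [hdiv]
  have hbjt1 := rpow_pos F (j - t - 1)
  have h5 : rr F * rr F ^ (j - t - 1) = rr F ^ (j - t) := by
    rw [← pow_succ']
    congr 1
    omega
  have h6 : rr F * (rr F ^ (j - t - 1) - 1) + rr F = rr F * rr F ^ (j - t - 1) := by
    rw [← Nat.mul_succ, Nat.succ_eq_add_one, Nat.sub_add_cancel hbjt1]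
  have h7 : rr F ^ (j - t) - 1 = (rr F - 1) + rr F * (rr F ^ (j - t - 1) - 1) := by omega
  rw [h7, Nat.add_mul_mod_self_left, Nat.mod_eq_of_lt (by omega)]

lemma prodD (j : ℕ) : ∏ t ∈ Finset.range j, D F t ^ (rr F - 1) = D F j / L F j := by
  induction j with
  | zero => simp [D, L]
  | succ j ih =>
    rw [Finset.prod_range_succ, ih]
    have hD : D F j * D F j ^ (rr F - 1) = D F j ^ rr F := by
      rw [← pow_succ']
      congr 1
      have := hr2 F
      omega
    calc D F j / L F j * D F j ^ (rr F - 1)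
        = D F j * D F j ^ (rr F - 1) / L F j := by ring
      _ = D F j ^ rr F / L F j := by rw [hD]
      _ = (br F (j + 1) * D F j ^ rr F) / (br F (j + 1) * L F j) := by
          rw [mul_div_mul_left _ _ (br_ne_zero F (by omega))]
      _ = D F (j + 1) / L F (j + 1) := rfl

lemma Cf_rpow_sub_one (j : ℕ) : Cf F (rr F ^ j - 1) = D F j / L F j := by
  rw [Cf, ← prodD F j]
  have hjn : j ≤ rr F ^ j - 1 + 1 := by have := lt_rpow F j; omega
  refine (Finset.prod_subset (Finset.range_subset_range.mpr hjn) ?_).symm.trans ?_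
  · intro t _ ht
    rw [Finset.mem_range, not_lt] at ht
    have : (rr F ^ j - 1) / rr F ^ t = 0 := by
      apply Nat.div_eq_of_lt
      have h2 : rr F ^ j ≤ rr F ^ t := Nat.pow_le_pow_right (by have := hr2 F; omega) ht
      have := rpow_pos F j
      omega
    rw [this, Nat.zero_mod, pow_zero]
  · exact Finset.prod_congr rfl fun t htj => by
      rw [digit_eq F (Finset.mem_range.mp htj)]

/-- Theorem: `Σ_{m=0}^n S1_C(n, m) · BC_m` equals `(-1)^j D_j / L_j^2` if `n = r^j - 1`
for some `j ≥ 0`, and equals `0` otherwise. -/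
theorem sum_stirlingCarlitzFirst_mul_bernoulliCarlitz
    (BC : ℕ → K F) (S1C : ℕ → ℕ → K F)
    (hBC : (PowerSeries.mk fun n => BC n / Cf F n) * eCdivZ F = 1)
    (hS1C : ∀ n k : ℕ,
      PowerSeries.coeff n (logC F ^ k) / Cf F k = S1C n k / Cf F n)
    (n : ℕ) :
    (∀ j : ℕ, n = (rr F) ^ j - 1 →
        ∑ m ∈ Finset.range (n + 1), S1C n m * BC m = (-1 : K F) ^ j * D F j / L F j ^ 2) ∧
      ((∀ j : ℕ, n ≠ (rr F) ^ j - 1) →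
        ∑ m ∈ Finset.range (n + 1), S1C n m * BC m = 0) := by
  obtain ⟨p, e, hp, hc, hre⟩ := exists_char F
  have hlog0 : PowerSeries.constantCoeff (logC F) = 0 := constantCoeff_logC F
  set B : PowerSeries (K F) := PowerSeries.mk fun n => BC n / Cf F n with hB
  -- eC = X * eCdivZ
  have hEC : eC F = PowerSeries.X * eCdivZ F := by
    ext m
    cases m with
    | zero =>
      rw [PowerSeries.coeff_zero_eq_constantCoeff, map_mul]
      simp [constantCoeff_eC F]
    | succ m =>
      rw [PowerSeries.coeff_succ_X_mul, eCdivZ, PowerSeries.coeff_mk]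
  -- log * (E ∘ log) = X
  have hV : logC F * pcomp F (eCdivZ F) (logC F) = PowerSeries.X := by
    rw [← pcomp_X_mul F hlog0, ← hEC, pcomp_eC_logC F hp hc hre]
  -- (B ∘ log) * (E ∘ log) = 1
  have hGV : pcomp F B (logC F) * pcomp F (eCdivZ F) (logC F) = 1 := by
    rw [← pcomp_mul F hlog0, hBC, pcomp_one]
  -- (B ∘ log) * X = log
  have hG : pcomp F B (logC F) * PowerSeries.X = logC F := by
    calc pcomp F B (logC F) * PowerSeries.X
        = pcomp F B (logC F) * (logC F * pcomp F (eCdivZ F) (logC F)) := by rw [hV]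
      _ = logC F * (pcomp F B (logC F) * pcomp F (eCdivZ F) (logC F)) := by ring
      _ = logC F := by rw [hGV, mul_one]
  -- Claim A: the key coefficient identity
  have claimA : ∀ N : ℕ, ∑ m ∈ Finset.range (N + 1),
      (BC m / Cf F m) * PowerSeries.coeff N (logC F ^ m)
      = PowerSeries.coeff (N + 1) (logC F) := by
    intro N
    have := congrArg (PowerSeries.coeff (N + 1)) hG
    rw [PowerSeries.coeff_succ_mul_X, coeff_pcomp] at this
    rw [← this]
    exact Finset.sum_congr rfl fun m _ => by rw [hB, PowerSeries.coeff_mk]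
  -- rewrite the target sum
  have hsum : ∑ m ∈ Finset.range (n + 1), S1C n m * BC m
      = Cf F n * PowerSeries.coeff (n + 1) (logC F) := by
    have hterm : ∀ m ∈ Finset.range (n + 1),
        S1C n m * BC m
        = Cf F n * ((BC m / Cf F m) * PowerSeries.coeff n (logC F ^ m)) := by
      intro m _
      have h1 : S1C n m = PowerSeries.coeff n (logC F ^ m) / Cf F m * Cf F n :=
        (div_eq_iff (Cf_ne_zero F n)).mp (hS1C n m).symm
      rw [h1]
      ring
    rw [Finset.sum_congr rfl hterm, ← Finset.mul_sum, claimA n]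
  constructor
  · intro j hj
    have hn1 : n + 1 = rr F ^ j := by have := rpow_pos F j; omega
    have hCf : Cf F n = D F j / L F j := by rw [hj, Cf_rpow_sub_one]
    rw [hsum, hn1, coeff_logC, hCf, ll]
    have hLj := L_ne_zero F j
    field_simp
  · intro hj
    have h0 : ∀ i, n + 1 ≠ rr F ^ i := by
      intro i h
      exact hj i (by have := rpow_pos F i; omega)
    rw [hsum, coeff_logC_eq_zero F h0, mul_zero]
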